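/- With notation as in the counting of limit roots for a fixed curve: let Γ be a connected graph (the dual graph of a nodal curve C of genus g with normalization of genus g^ν, so g = g^ν + b₁(Γ)), and fix d : V(Γ) → ℤ/r of total sum 0. Then Σ over all weighted subgraphs Δ^w satisfying (C1),(C2) of r^{2g^ν + b₁(Γ∖Δ)} · r^{b₁(Γ) − b₁(Γ∖Δ)} = r^{2g}. (Here Γ∖Δ denotes Γ with the edges of Δ removed, and b₁ of a possibly disconnected graph is #edges − #vertices + #components.) -/

import Mathlib

/-- The number of connected components of the subgraph of `(V, E)` with edge set `s`. -/
noncomputable def subgraphComponents {V E : Type} (head tail : E → V) (s : Finset E) : ℕ :=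
  Nat.card (Quot (fun x y : V =>
    ∃ e ∈ s, (head e = x ∧ tail e = y) ∨ (head e = y ∧ tail e = x)))

/-- The first Betti number `b₁ = #edges − #vertices + #components` of the subgraph of
`(V, E)` with edge set `s` (and all the vertices `V`). -/
noncomputable def subgraphBetti {V E : Type} [Fintype V] (head tail : E → V)
    (s : Finset E) : ℕ :=
  s.card + subgraphComponents head tail s - Fintype.card V


section Graph
variable {V E : Type} (head tail : E → V)

def grel (s : Finset E) : V → V → Prop :=
  fun x y => ∃ e ∈ s, (head e = x ∧ tail e = y) ∨ (head e = y ∧ tail e = x)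

lemma card_le_succ_of_almost_inj {α β : Type} [Finite β] (f : α → β) (a : α)
    (h : ∀ x y, x ≠ a → y ≠ a → f x = f y → x = y) :
    Nat.card α ≤ Nat.card β + 1 := by
  classical
  haveI := Fintype.ofFinite β
  have hinj : Function.Injective (fun x => if x = a then (none : Option β) else some (f x)) := by
    intro x y hxy
    by_cases hx : x = a <;> by_cases hy : y = a <;> simp [hx, hy] at hxy ⊢
    · exact h x y hx hy hxy
  calc Nat.card α ≤ Nat.card (Option β) := Nat.card_le_card_of_injective _ hinj
    _ = Nat.card β + 1 := Finite.card_option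

lemma eqvgen_key [DecidableEq E] (e : E) (s : Finset E) :
    ∀ x y : V, Relation.EqvGen (grel head tail (insert e s)) x y →
      Quot.mk (grel head tail s) x = Quot.mk (grel head tail s) y ∨
      ((Quot.mk (grel head tail s) x = Quot.mk (grel head tail s) (head e) ∨
        Quot.mk (grel head tail s) x = Quot.mk (grel head tail s) (tail e)) ∧
       (Quot.mk (grel head tail s) y = Quot.mk (grel head tail s) (head e) ∨
        Quot.mk (grel head tail s) y = Quot.mk (grel head tail s) (tail e))) := by
  intro x y hxy
  induction hxy with
  | rel x y hxy =>
      obtain ⟨e', he', h⟩ := hxy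
      rcases Finset.mem_insert.1 he' with he' | he'
      · subst he'
        rcases h with ⟨h1, h2⟩ | ⟨h1, h2⟩ <;> subst h1 <;> subst h2
        · exact Or.inr ⟨Or.inl rfl, Or.inr rfl⟩
        · exact Or.inr ⟨Or.inr rfl, Or.inl rfl⟩
      · exact Or.inl (Quot.sound ⟨e', he', h⟩)
  | refl x => exact Or.inl rfl
  | symm x y _ ih =>
      rcases ih with ih | ⟨h1, h2⟩
      · exact Or.inl ih.symm
      · exact Or.inr ⟨h2, h1⟩
  | trans x y z _ _ ih1 ih2 =>
      rcases ih1 with ih1 | ⟨h1, h2⟩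
      · rcases ih2 with ih2 | ⟨h3, h4⟩
        · exact Or.inl (ih1.trans ih2)
        · exact Or.inr ⟨ih1 ▸ h3, h4⟩
      · rcases ih2 with ih2 | ⟨h3, h4⟩
        · exact Or.inr ⟨h1, ih2 ▸ h2⟩
        · exact Or.inr ⟨h1, h4⟩

lemma comp_step [Finite V] [DecidableEq E] (e : E) (s : Finset E) :
    Nat.card (Quot (grel head tail s)) ≤ Nat.card (Quot (grel head tail (insert e s))) + 1 := by
  classical
  have hsub : ∀ x y : V, grel head tail s x y → grel head tail (insert e s) x y := by
    rintro x y ⟨e', he', h⟩; exact ⟨e', Finset.mem_insert_of_mem he', h⟩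
  let φ : Quot (grel head tail s) → Quot (grel head tail (insert e s)) :=
    Quot.lift (Quot.mk _) (fun x y h => Quot.sound (hsub x y h))
  apply card_le_succ_of_almost_inj φ (Quot.mk _ (head e))
  intro p q hp hq hpq
  induction p using Quot.ind with | _ x =>
  induction q using Quot.ind with | _ y =>
  have hxy : Quot.mk (grel head tail (insert e s)) x = Quot.mk _ y := hpq
  rcases eqvgen_key head tail e s x y (Quot.eqvGen_exact hxy) with h | ⟨h1, h2⟩
  · exact h
  · rcases h1 with h1 | h1
    · exact (hp h1).elim
    · rcases h2 with h2 | h2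
      · exact (hq h2).elim
      · exact h1.trans h2.symm

lemma eqvgen_empty : ∀ x y : V, Relation.EqvGen (grel head tail (∅ : Finset E)) x y → x = y := by
  intro x y h
  induction h with
  | rel x y h => obtain ⟨e, he, -⟩ := h; exact absurd he (Finset.notMem_empty e)
  | refl x => rfl
  | symm _ _ _ ih => exact ih.symm
  | trans _ _ _ _ _ ih1 ih2 => exact ih1.trans ih2

lemma comp_empty [Fintype V] :
    Nat.card (Quot (grel head tail (∅ : Finset E))) = Fintype.card V := by
  have hbij : Function.Bijective (Quot.mk (grel head tail (∅ : Finset E))) :=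
    ⟨fun x y hxy => eqvgen_empty head tail x y (Quot.eqvGen_exact hxy), Quot.exists_rep⟩
  rw [← Nat.card_eq_of_bijective _ hbij, Nat.card_eq_fintype_card]

lemma f_insert [Fintype V] [DecidableEq E] (e : E) (s : Finset E) :
    s.card + Nat.card (Quot (grel head tail s)) ≤
    (insert e s).card + Nat.card (Quot (grel head tail (insert e s))) := by
  by_cases he : e ∈ s
  · rw [Finset.insert_eq_self.2 he]
  · rw [Finset.card_insert_of_notMem he]
    have := comp_step head tail e s
    omega

lemma f_mono [Fintype V] [DecidableEq E] {s t : Finset E} (hst : s ⊆ t) :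
    s.card + Nat.card (Quot (grel head tail s)) ≤
    t.card + Nat.card (Quot (grel head tail t)) := by
  have key : ∀ u s : Finset E, s.card + Nat.card (Quot (grel head tail s)) ≤
      (s ∪ u).card + Nat.card (Quot (grel head tail (s ∪ u))) := by
    intro u
    induction u using Finset.induction_on with
    | empty => intro s; simp
    | @insert a u ha ih =>
        intro s
        have h1 := ih s
        have h2 := f_insert head tail a (s ∪ u)
        rw [Finset.union_insert]
        exact h1.trans h2
  have := key (t \ s) s
  rwa [Finset.union_sdiff_of_subset hst] at this

lemma comp_conn [Fintype E] [Nonempty V]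
    (hconn : ∀ a b : V, Relation.ReflTransGen
      (fun x y => ∃ e, (head e = x ∧ tail e = y) ∨ (head e = y ∧ tail e = x)) a b) :
    Nat.card (Quot (grel head tail (Finset.univ : Finset E))) = 1 := by
  rw [Nat.card_eq_one_iff_unique]
  refine ⟨⟨fun p q => ?_⟩, ⟨Quot.mk _ (Classical.arbitrary V)⟩⟩
  induction p using Quot.ind with | _ x =>
  induction q using Quot.ind with | _ y =>
  induction hconn x y with
  | refl => rfl
  | tail _ h ih =>
      obtain ⟨e, he⟩ := h
      exact ih.trans (Quot.sound ⟨e, Finset.mem_univ e, he⟩)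

end Graph

section Count
attribute [local instance] Classical.propDecidable
set_option linter.unusedSectionVars false
variable {V E : Type} [Fintype V] [Fintype E] [DecidableEq V] (head tail : E → V)
  (r : ℕ) [NeZero r]

def bdFun (u : E → ZMod r) : V → ZMod r :=
  fun x => ∑ e, ((if head e = x then u e else 0) + (if tail e = x then -u e else 0))

def bd : (E → ZMod r) →ₗ[ZMod r] (V → ZMod r) where
  toFun := bdFun head tail r
  map_add' := by
    intro u v
    funext x
    simp only [bdFun, ← Finset.sum_add_distrib, Pi.add_apply]
    apply Finset.sum_congr rfl
    intros; split_ifs <;> ring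
  map_smul' := by
    intro c u
    funext x
    simp only [bdFun, RingHom.id_apply, Pi.smul_apply, smul_eq_mul, Finset.mul_sum]
    apply Finset.sum_congr rfl
    intros; split_ifs <;> ring

def sigmaMap : (V → ZMod r) →ₗ[ZMod r] ZMod r where
  toFun := fun f => ∑ x, f x
  map_add' := by intros; exact Finset.sum_add_distrib
  map_smul' := by intros; simp [Finset.mul_sum]

lemma sigma_bd (u : E → ZMod r) : sigmaMap r (bd head tail r u) = 0 := by
  show ∑ x, bdFun head tail r u x = 0
  unfold bdFun
  rw [Finset.sum_comm]
  simp [Finset.sum_add_distrib, Finset.sum_ite_eq]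

def dl (x : V) : V → ZMod r := fun z => if x = z then 1 else 0

lemma bd_single [DecidableEq E] (e : E) :
    bd head tail r (fun e' => if e' = e then 1 else 0) = dl r (head e) - dl r (tail e) := by
  funext x
  show bdFun head tail r _ x = _
  unfold bdFun
  rw [Finset.sum_eq_single_of_mem e (Finset.mem_univ e)]
  · simp only [dl, Pi.sub_apply, if_pos rfl]
    split_ifs <;> ring
  · intro b _ hb; simp [hb]

lemma dl_sub_mem
    (hconn : ∀ a b : V, Relation.ReflTransGen
      (fun x y => ∃ e, (head e = x ∧ tail e = y) ∨ (head e = y ∧ tail e = x)) a b)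
    (x y : V) : dl r x - dl r y ∈ LinearMap.range (bd head tail r) := by
  classical
  induction hconn x y with
  | refl => rw [sub_self]; exact Submodule.zero_mem _
  | tail hab h ih =>
      rename_i b c
      have hbc : dl r b - dl r c ∈ LinearMap.range (bd head tail r) := by
        obtain ⟨e, he⟩ := h
        rcases he with ⟨h1, h2⟩ | ⟨h1, h2⟩
        · rw [← h1, ← h2]; exact ⟨_, bd_single head tail r e⟩
        · have : dl r b - dl r c = -(dl r (head e) - dl r (tail e)) := by
            rw [h1, h2]; ring
          rw [this]
          exact Submodule.neg_mem _ ⟨_, bd_single head tail r e⟩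
      have : dl r x - dl r c = (dl r x - dl r b) + (dl r b - dl r c) := by ring
      rw [this]
      exact Submodule.add_mem _ ih hbc

lemma range_bd [Nonempty V]
    (hconn : ∀ a b : V, Relation.ReflTransGen
      (fun x y => ∃ e, (head e = x ∧ tail e = y) ∨ (head e = y ∧ tail e = x)) a b) :
    LinearMap.range (bd head tail r) = LinearMap.ker (sigmaMap (V := V) r) := by
  apply le_antisymm
  · rintro f ⟨u, rfl⟩
    exact LinearMap.mem_ker.2 (sigma_bd head tail r u)
  · intro f hf
    have hf0 : ∑ x, f x = 0 := hf
    obtain ⟨x₀⟩ := ‹Nonempty V›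
    have hrepr : f = ∑ x, f x • (dl r x - dl r x₀) := by
      funext z
      rw [Finset.sum_apply]
      simp only [Pi.smul_apply, Pi.sub_apply, smul_eq_mul, dl, mul_sub]
      rw [Finset.sum_sub_distrib]
      simp only [mul_ite, mul_one, mul_zero]
      rw [Finset.sum_ite_eq' Finset.univ z f]
      by_cases hz : x₀ = z <;>
        simp [hz, ← Finset.sum_mul, hf0]
    rw [hrepr]
    exact Submodule.sum_mem _ fun x _ =>
      Submodule.smul_mem _ _ (dl_sub_mem head tail r hconn x x₀)

lemma fiber_card (y : V → ZMod r) (u₀ : E → ZMod r) (h₀ : bd head tail r u₀ = y) :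
    (Finset.univ.filter fun u => bd head tail r u = y).card =
    (Finset.univ.filter fun u => bd head tail r u = 0).card := by
  classical
  apply Finset.card_bij' (fun u _ => u - u₀) (fun v _ => v + u₀)
  · intro u hu
    simp only [Finset.mem_filter, Finset.mem_univ, true_and] at hu ⊢
    rw [map_sub, hu, h₀, sub_self]
  · intro v hv
    simp only [Finset.mem_filter, Finset.mem_univ, true_and] at hv ⊢
    rw [map_add, hv, h₀, zero_add]
  · intros; simp
  · intros; simp

lemma count_ker [Nonempty V]
    (hconn : ∀ a b : V, Relation.ReflTransGen
      (fun x y => ∃ e, (head e = x ∧ tail e = y) ∨ (head e = y ∧ tail e = x)) a b)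
    (hVE : Fintype.card V ≤ Fintype.card E + 1) :
    (Finset.univ.filter fun u => bd head tail r u = 0).card =
      r ^ (Fintype.card E + 1 - Fintype.card V) := by
  classical
  set K := (Finset.univ.filter fun u => bd head tail r u = 0).card with hK
  -- fibers of bd
  have hfib : Fintype.card (E → ZMod r) =
      ((Finset.univ : Finset (E → ZMod r)).image (bd head tail r)).card * K := by
    rw [← Finset.card_univ,
      Finset.card_eq_sum_card_fiberwise
        (f := ⇑(bd head tail r)) (t := Finset.univ.image (bd head tail r))
        (fun u _ => Finset.mem_image_of_mem _ (Finset.mem_univ u))]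
    have hfibc : ∀ y ∈ (Finset.univ : Finset (E → ZMod r)).image (bd head tail r),
        (Finset.univ.filter fun u => bd head tail r u = y).card = K := by
      intro y hy
      obtain ⟨u₀, -, h₀⟩ := Finset.mem_image.1 hy
      exact fiber_card head tail r y u₀ h₀
    rw [Finset.sum_congr rfl hfibc, Finset.sum_const, smul_eq_mul]
  -- image of bd as a finset equals the fiber of sigma over 0
  have himg : (Finset.univ : Finset (E → ZMod r)).image (bd head tail r) =
      Finset.univ.filter (fun f => sigmaMap (V := V) r f = 0) := by
    ext f
    simp only [Finset.mem_image, Finset.mem_filter, Finset.mem_univ, true_and]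
    constructor
    · rintro ⟨u, -, rfl⟩; exact sigma_bd head tail r u
    · intro hf
      have : f ∈ LinearMap.range (bd head tail r) := by
        rw [range_bd head tail r hconn]; exact hf
      obtain ⟨u, hu⟩ := this
      first
      | exact ⟨u, Finset.mem_univ u, hu⟩
      | exact ⟨u, hu⟩
  -- fibers of sigma
  set Ks := (Finset.univ.filter fun f : V → ZMod r => sigmaMap (V := V) r f = 0).card with hKs
  have hsig : Fintype.card (V → ZMod r) = r * Ks := by
    obtain ⟨x₀⟩ := ‹Nonempty V›
    have hsurj : ∀ c : ZMod r, ∃ f, sigmaMap (V := V) r f = c := by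
      intro c
      refine ⟨fun z => if z = x₀ then c else 0, ?_⟩
      show ∑ z, _ = c
      rw [Finset.sum_ite_eq' Finset.univ x₀ (fun _ => c)]
      simp
    rw [← Finset.card_univ,
      Finset.card_eq_sum_card_fiberwise
        (f := ⇑(sigmaMap (V := V) r)) (t := Finset.univ)
        (fun u _ => Finset.mem_univ _)]
    have hfibc : ∀ c ∈ (Finset.univ : Finset (ZMod r)),
        (Finset.univ.filter fun f : V → ZMod r => sigmaMap (V := V) r f = c).card = Ks := by
      intro c _
      obtain ⟨f₀, hf₀⟩ := hsurj c
      apply Finset.card_bij' (fun u _ => u - f₀) (fun v _ => v + f₀)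
      · intro u hu
        simp only [Finset.mem_filter, Finset.mem_univ, true_and] at hu ⊢
        rw [map_sub, hu, hf₀, sub_self]
      · intro v hv
        simp only [Finset.mem_filter, Finset.mem_univ, true_and] at hv ⊢
        rw [map_add, hv, hf₀, zero_add]
      · intros; simp
      · intros; simp
    rw [Finset.sum_congr rfl hfibc, Finset.sum_const, smul_eq_mul,
      Finset.card_univ, ZMod.card]
  have hcardE : Fintype.card (E → ZMod r) = r ^ Fintype.card E := by
    rw [Fintype.card_fun, ZMod.card]
  have hcardV : Fintype.card (V → ZMod r) = r ^ Fintype.card V := by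
    rw [Fintype.card_fun, ZMod.card]
  rw [hcardE, himg, ← hKs] at hfib
  rw [hcardV] at hsig
  -- K * r^|V| = r^(|E|+1)
  have hr : 0 < r := Nat.pos_of_ne_zero (NeZero.ne r)
  have hmain : K * r ^ Fintype.card V = r ^ (Fintype.card E + 1) := by
    calc K * r ^ Fintype.card V = K * (r * Ks) := by rw [hsig]
    _ = (Ks * K) * r := by ring
    _ = r ^ Fintype.card E * r := by rw [← hfib]
    _ = r ^ (Fintype.card E + 1) := by rw [pow_succ]
  have hsplit : r ^ (Fintype.card E + 1) =
      r ^ (Fintype.card E + 1 - Fintype.card V) * r ^ Fintype.card V := by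
    rw [← pow_add, Nat.sub_add_cancel hVE]
  rw [hsplit] at hmain
  exact Nat.eq_of_mul_eq_mul_right (Nat.pow_pos hr) hmain

lemma count_fiber_d [Nonempty V]
    (hconn : ∀ a b : V, Relation.ReflTransGen
      (fun x y => ∃ e, (head e = x ∧ tail e = y) ∨ (head e = y ∧ tail e = x)) a b)
    (hVE : Fintype.card V ≤ Fintype.card E + 1)
    (d : V → ZMod r) (hd : ∑ x, d x = 0) :
    (Finset.univ.filter fun u => bd head tail r u = d).card =
      r ^ (Fintype.card E + 1 - Fintype.card V) := by
  have hdmem : d ∈ LinearMap.range (bd head tail r) := by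
    rw [range_bd head tail r hconn]; exact hd
  obtain ⟨u₀, h₀⟩ := hdmem
  rw [fiber_card head tail r d u₀ h₀, count_ker head tail r hconn hVE]

end Count

section Main
set_option linter.unusedSectionVars false
variable {V E : Type} [Fintype V] [Fintype E] [DecidableEq V] (head tail : E → V)

lemma subgraphComponents_eq (s : Finset E) :
    subgraphComponents head tail s = Nat.card (Quot (grel head tail s)) := rfl

lemma subgraphBetti_le (s : Finset E) :
    subgraphBetti head tail s ≤ subgraphBetti head tail (Finset.univ : Finset E) := by
  classical
  have h := f_mono head tail (s.subset_univ)
  unfold subgraphBetti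
  rw [subgraphComponents_eq, subgraphComponents_eq]
  omega

end Main
open Classical in
/-- Counting limit roots on a fixed curve: `Γ` is the (connected) dual graph of a nodal
curve `C` of genus `g` whose normalization has genus `g^ν`, so `g = g^ν + b₁(Γ)`.
Weighted subgraphs `Δ^w` satisfying (C1) and (C2) with respect to `d : V → ℤ/r` of total
sum `0` are encoded by pairs `(u,v)` of half-edge weight functions as in the paper, with
`Δ = {e | u e ≠ 0}`.  Then
`Σ_{Δ^w} r^{2g^ν + b₁(Γ∖Δ)} · r^{b₁(Γ) − b₁(Γ∖Δ)} = r^{2g}`. -/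
theorem stmt5 {V E : Type} [Fintype V] [Fintype E] [DecidableEq V]
    (head tail : E → V) (r : ℕ) [NeZero r]
    (hconn : ∀ a b : V, Relation.ReflTransGen
      (fun x y => ∃ e, (head e = x ∧ tail e = y) ∨ (head e = y ∧ tail e = x)) a b)
    (gnu g : ℕ) (hg : g = gnu + subgraphBetti head tail (Finset.univ : Finset E))
    (d : V → ZMod r) (hd : ∑ x, d x = 0) :
    ∑ p ∈ Finset.univ.filter (fun p : (E → ZMod r) × (E → ZMod r) =>
        (∀ e, p.1 e + p.2 e = 0 ∧ (p.1 e = 0 ↔ p.2 e = 0)) ∧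
        (∀ x, (∑ e, ((if head e = x then p.1 e else 0) +
          (if tail e = x then p.2 e else 0))) = d x)),
      r ^ (2 * gnu + subgraphBetti head tail (Finset.univ.filter (fun e => p.1 e = 0)))
        * r ^ (subgraphBetti head tail (Finset.univ : Finset E)
            - subgraphBetti head tail (Finset.univ.filter (fun e => p.1 e = 0)))
      = r ^ (2 * g) := by
  classical
  by_cases hV : Nonempty V
  · -- connected nonempty case
    have hcomp : subgraphComponents head tail (Finset.univ : Finset E) = 1 := by
      rw [subgraphComponents_eq]
      exact comp_conn head tail hconn
    have hVE : Fintype.card V ≤ Fintype.card E + 1 := by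
      have h := f_mono head tail (Finset.empty_subset (Finset.univ : Finset E))
      rw [comp_empty head tail] at h
      have h2 : Nat.card (Quot (grel head tail (Finset.univ : Finset E))) = 1 := by
        rw [← subgraphComponents_eq, hcomp]
      rw [h2, Finset.card_empty, Finset.card_univ] at h
      omega
    set B := subgraphBetti head tail (Finset.univ : Finset E) with hBdef
    have hB : B = Fintype.card E + 1 - Fintype.card V := by
      rw [hBdef]
      unfold subgraphBetti
      rw [hcomp, Finset.card_univ]
    have hterm : ∀ p : (E → ZMod r) × (E → ZMod r),
        r ^ (2 * gnu + subgraphBetti head tail (Finset.univ.filter (fun e => p.1 e = 0)))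
          * r ^ (B - subgraphBetti head tail (Finset.univ.filter (fun e => p.1 e = 0)))
        = r ^ (2 * gnu + B) := by
      intro p
      rw [← pow_add]
      congr 1
      have := subgraphBetti_le head tail (Finset.univ.filter (fun e => p.1 e = 0))
      omega
    rw [Finset.sum_congr rfl (fun p _ => hterm p), Finset.sum_const, smul_eq_mul]
    have hcount : (Finset.univ.filter fun u => bd head tail r u = d).card = r ^ B := by
      rw [count_fiber_d head tail r hconn hVE d hd, hB]
    rw [show r ^ (2 * g) = r ^ B * r ^ (2 * gnu + B) by rw [← pow_add]; congr 1; omega]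
    rw [← hcount]
    congr 1
    refine Finset.card_bij' (fun p _ => p.1) (fun u _ => (u, -u)) ?hi ?hj ?hleft ?hright
    case hi =>
      intro p hp
      rw [Finset.mem_filter] at hp
      obtain ⟨-, h1, h2⟩ := hp
      have hp2 : p.2 = fun e => -p.1 e := funext fun e =>
        eq_neg_of_add_eq_zero_right (h1 e).1
      rw [hp2] at h2
      simp only [Finset.mem_filter, Finset.mem_univ, true_and]
      funext x
      exact h2 x
    case hj =>
      intro u hu
      simp only [Finset.mem_filter, Finset.mem_univ, true_and] at hu
      rw [Finset.mem_filter]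
      refine ⟨Finset.mem_univ _, fun e => ⟨add_neg_cancel _, ?_⟩, fun x => ?_⟩
      · exact (neg_eq_zero (a := u e)).symm
      · exact congrFun hu x
    case hleft =>
      intro p hp
      rw [Finset.mem_filter] at hp
      obtain ⟨-, h1, -⟩ := hp
      refine Prod.ext rfl ?_
      exact funext fun e => (eq_neg_of_add_eq_zero_right (h1 e).1).symm
    case hright =>
      intro u _
      rfl
  · -- degenerate case: no vertices, hence no edges
    have hE : IsEmpty V := not_nonempty_iff.1 hV
    have hEE : IsEmpty E := Function.isEmpty head
    have hB0 : ∀ s : Finset E, subgraphBetti head tail s = 0 := by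
      intro s
      unfold subgraphBetti subgraphComponents
      have h1 : s.card = 0 := by
        rw [Finset.card_eq_zero]
        exact Finset.eq_empty_of_forall_notMem (fun e => hEE.elim e)
      have h0 : Nat.card (Quot (fun x y : V =>
          ∃ e ∈ s, (head e = x ∧ tail e = y) ∨ (head e = y ∧ tail e = x))) = 0 := by
        have hq : IsEmpty (Quot (fun x y : V =>
            ∃ e ∈ s, (head e = x ∧ tail e = y) ∨ (head e = y ∧ tail e = x))) := by
          constructor
          intro q
          obtain ⟨x, -⟩ := Quot.exists_rep q
          exact hE.elim x
        exact @Nat.card_of_isEmpty _ hq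
      omega
    have hterm : ∀ p : (E → ZMod r) × (E → ZMod r),
        r ^ (2 * gnu + subgraphBetti head tail (Finset.univ.filter (fun e => p.1 e = 0)))
          * r ^ (subgraphBetti head tail (Finset.univ : Finset E)
              - subgraphBetti head tail (Finset.univ.filter (fun e => p.1 e = 0)))
        = r ^ (2 * g) := by
      intro p
      rw [hB0, hB0]
      have hgg : g = gnu := by
        rw [hg, hB0, Nat.add_zero]
      rw [hgg]
      simp
    rw [Finset.filter_true_of_mem
      (fun p _ => ⟨fun e => hEE.elim e, fun x => hE.elim x⟩)]
    rw [Finset.sum_congr rfl (fun p _ => hterm p), Finset.sum_const, smul_eq_mul]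
    have cu : ∀ (inst : Fintype ((E → ZMod r) × (E → ZMod r))),
        (@Finset.univ _ inst).card = 1 := fun inst => by
      rw [@Finset.card_univ _ inst]
      exact (@Fintype.card_eq_one_iff _ inst).mpr
        ⟨(fun e => hEE.elim e, fun e => hEE.elim e), fun q =>
          Prod.ext (funext fun e => hEE.elim e) (funext fun e => hEE.elim e)⟩
    rw [cu, one_mul]
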